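/- Let R be a complete DVR with maximal ideal (p), p odd, fraction field K, and let q ∈ GL_n(R) with q^t = ±q and qq^t = 1, q^{(p)} = q (a split form). Define the involution τ on GL_n(R) by x^τ = q^{−1}(x^t)^{−1}q and the induced involution on g = Mat_n(R) (with group law a +_δ b = a+b+pab) by b^{L_δ(τ)} = −_δ(q^{−1} b^t q), where −_δ c is the +_δ-inverse. Let g⁺ = {b : b^{L_δ(τ)} = b} and g⁻ = {b : b^{L_δ(τ)} = −_δ b}. Then the map g⁺ × g⁻ → g, (b,c) ↦ b +_δ c, is a bijection. -/

import Mathlib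

open Matrix

namespace Stmt13

variable {R : Type*} [CommRing R] {n : ℕ}

lemma mem_smul_top_iff (P : R) (k : ℕ) (x : R) :
    x ∈ (Ideal.span {P})^k • (⊤ : Submodule R R) ↔ ∃ y, x = P^k * y := by
  rw [Ideal.span_singleton_pow, smul_eq_mul, Ideal.mul_top, Ideal.mem_span_singleton]
  exact ⟨fun ⟨y, hy⟩ => ⟨y, hy⟩, fun ⟨y, hy⟩ => ⟨y, hy⟩⟩

lemma matrix_haus (P : R) (hh : IsHausdorff (Ideal.span {P}) R)
    (X : Matrix (Fin n) (Fin n) R) (hX : ∀ k, ∃ E, X = P^k • E) : X = 0 := by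
  ext i j
  refine hh.haus (X i j) (fun k => ?_)
  rw [SModEq.sub_mem, sub_zero, mem_smul_top_iff]
  obtain ⟨E, hE⟩ := hX k
  exact ⟨E i j, by rw [hE]; simp [Matrix.smul_apply]⟩

lemma matrix_limit (P : R) (pre : IsPrecomplete (Ideal.span {P}) R)
    (f : ℕ → Matrix (Fin n) (Fin n) R)
    (hf : ∀ k l, k ≤ l → ∃ E, f l - f k = P^k • E) :
    ∃ L : Matrix (Fin n) (Fin n) R, ∀ k, ∃ E, L - f k = P^k • E := by
  have key : ∀ i j, ∃ L, ∀ k, f k i j ≡ L [SMOD (Ideal.span {P})^k • (⊤ : Submodule R R)] := by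
    intro i j
    refine pre.prec (fun {k l} hkl => ?_)
    obtain ⟨E, hE⟩ := hf k l hkl
    rw [SModEq.sub_mem, mem_smul_top_iff]
    refine ⟨-E i j, ?_⟩
    have := congrFun (congrFun hE i) j
    simp only [Matrix.sub_apply, Matrix.smul_apply, smul_eq_mul] at this
    linear_combination -this
  choose L hL using key
  refine ⟨Matrix.of L, fun k => ?_⟩
  have : ∀ i j, ∃ y, L i j - f k i j = P^k * y := by
    intro i j
    have := hL i j k
    rw [SModEq.sub_mem, mem_smul_top_iff] at this
    obtain ⟨y, hy⟩ := this
    exact ⟨-y, by linear_combination -hy⟩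
  choose E hE using this
  refine ⟨Matrix.of E, ?_⟩
  ext i j
  simpa using hE i j

lemma pow_reg (P : R) (hreg : ∀ X : Matrix (Fin n) (Fin n) R, P • X = 0 → X = 0)
    (k : ℕ) (X : Matrix (Fin n) (Fin n) R) (h : P^k • X = 0) : X = 0 := by
  induction k generalizing X with
  | zero => simpa using h
  | succ k ih =>
    refine hreg X (ih (P • X) ?_)
    rw [smul_smul, ← pow_succ]
    exact h

lemma sq_inj (P h2 : R) (hh2 : 2 * h2 = 1)
    (hreg : ∀ X : Matrix (Fin n) (Fin n) R, P • X = 0 → X = 0)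
    (hhaus : ∀ X : Matrix (Fin n) (Fin n) R, (∀ k, ∃ E, X = P^k • E) → X = 0)
    (x y : Matrix (Fin n) (Fin n) R)
    (hxy : (1 + P • x) * (1 + P • x) = (1 + P • y) * (1 + P • y)) : x = y := by
  set D := x - y with hD
  have key : (2:R) • D + P • (x * D + D * y) = 0 := by
    apply hreg
    have expand : (1 + P • x) * (1 + P • x) - (1 + P • y) * (1 + P • y)
        = P • ((2:R) • D + P • (x * D + D * y)) := by
      simp only [hD, mul_add, add_mul, mul_sub, sub_mul, smul_add, smul_sub, smul_smul,
        mul_smul_comm, smul_mul_assoc, mul_one, one_mul]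
      module
    rw [← expand, hxy, sub_self]
  have div : ∀ k, ∃ E, D = P^k • E := by
    intro k
    induction k with
    | zero => exact ⟨D, by simp⟩
    | succ k ih =>
      obtain ⟨E, hE⟩ := ih
      have hE0 : (2:R) • E + P • (x * E + E * y) = 0 := by
        apply pow_reg P hreg k
        rw [← key, hE]
        simp only [smul_add, smul_smul, mul_smul_comm, smul_mul_assoc]
        module
      have h3 : (2:R) • E = -(P • (x * E + E * y)) := by
        linear_combination (norm := module) hE0
      refine ⟨-(h2 • (x * E + E * y)), ?_⟩
      have step : E = P • (-(h2 • (x * E + E * y))) := by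
        calc E = ((2:R) * h2) • E := by rw [hh2, one_smul]
        _ = h2 • ((2:R) • E) := by rw [smul_smul, mul_comm]
        _ = h2 • (-(P • (x * E + E * y))) := by rw [h3]
        _ = P • (-(h2 • (x * E + E * y))) := by
            rw [smul_neg, smul_neg, smul_smul, smul_smul, mul_comm]
      rw [hE]
      conv_lhs => rw [step]
      rw [smul_smul, ← pow_succ]
  have : D = 0 := hhaus D div
  rw [hD, sub_eq_zero] at this
  exact this

def newton (P h2 : R) (m : Matrix (Fin n) (Fin n) R) : ℕ → Matrix (Fin n) (Fin n) R
  | 0 => 0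
  | k+1 => h2 • (m - P • (newton P h2 m k * newton P h2 m k))

variable (P h2 : R) (m : Matrix (Fin n) (Fin n) R)

lemma commute_newton (k : ℕ) : Commute m (newton P h2 m k) := by
  induction k with
  | zero => exact Commute.zero_right m
  | succ k ih =>
    show Commute m (h2 • (m - P • _))
    exact ((Commute.refl m).sub_right ((ih.mul_right ih).smul_right P)).smul_right h2

lemma newton_commute_succ (k : ℕ) : Commute (newton P h2 m k) (newton P h2 m (k+1)) := by
  show Commute _ (h2 • (m - P • _))
  exact (((commute_newton P h2 m k).symm.sub_right
    (((Commute.refl _).mul_right (Commute.refl _)).smul_right P))).smul_right h2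

lemma newton_diff (k : ℕ) :
    ∃ E, newton P h2 m (k+1) - newton P h2 m k = P^k • E := by
  induction k with
  | zero => exact ⟨newton P h2 m 1, by simp [newton]⟩
  | succ k ih =>
    obtain ⟨E, hE⟩ := ih
    refine ⟨-(h2 • ((newton P h2 m (k+1) + newton P h2 m k) * E)), ?_⟩
    have factor : newton P h2 m (k+1) * newton P h2 m (k+1)
        - newton P h2 m k * newton P h2 m k
        = (newton P h2 m (k+1) + newton P h2 m k) * (P^k • E) := by
      rw [← hE]
      exact (newton_commute_succ P h2 m k).symm.mul_self_sub_mul_self_eq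
    have expand : newton P h2 m (k+2) - newton P h2 m (k+1)
        = (h2 * P) • (newton P h2 m k * newton P h2 m k
            - newton P h2 m (k+1) * newton P h2 m (k+1)) := by
      show h2 • (m - P • _) - h2 • (m - P • _) = _
      rw [← smul_sub, sub_sub_sub_cancel_left, ← smul_sub, smul_smul]
    rw [expand, ← neg_sub, factor]
    simp only [smul_neg, mul_smul_comm, smul_mul_assoc, smul_smul, pow_succ]
    module

lemma newton_cauchy (k l : ℕ) (hkl : k ≤ l) :
    ∃ E, newton P h2 m l - newton P h2 m k = P^k • E := by
  obtain ⟨d, rfl⟩ := Nat.exists_eq_add_of_le hkl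
  induction d with
  | zero => exact ⟨0, by simp⟩
  | succ d ih =>
    obtain ⟨E, hE⟩ := ih (Nat.le_add_right k d)
    obtain ⟨F, hF⟩ := newton_diff P h2 m (k+d)
    refine ⟨P^d • F + E, ?_⟩
    have : newton P h2 m (k+(d+1)) - newton P h2 m k
        = (newton P h2 m ((k+d)+1) - newton P h2 m (k+d))
          + (newton P h2 m (k+d) - newton P h2 m k) := by
      rw [show k+(d+1) = (k+d)+1 from rfl]; abel
    rw [this, hE, hF, pow_add]
    simp only [smul_add, smul_smul]

lemma newton_err (hh2 : 2 * h2 = 1) (k : ℕ) :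
    ∃ E, (2:R) • newton P h2 m k + P • (newton P h2 m k * newton P h2 m k) - m
      = P^k • E := by
  cases k with
  | zero => exact ⟨-m, by simp [newton]⟩
  | succ k =>
    obtain ⟨E, hE⟩ := newton_diff P h2 m k
    refine ⟨(newton P h2 m (k+1) + newton P h2 m k) * E, ?_⟩
    have h2c : (2:R) • newton P h2 m (k+1)
        = m - P • (newton P h2 m k * newton P h2 m k) := by
      show (2:R) • (h2 • _) = _
      rw [smul_smul, hh2, one_smul]
    calc (2:R) • newton P h2 m (k+1)
          + P • (newton P h2 m (k+1) * newton P h2 m (k+1)) - m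
        = P • (newton P h2 m (k+1) * newton P h2 m (k+1)
            - newton P h2 m k * newton P h2 m k) := by
          rw [h2c, smul_sub]; abel
      _ = P • ((newton P h2 m (k+1) + newton P h2 m k) * (P^k • E)) := by
          rw [← hE, (newton_commute_succ P h2 m k).symm.mul_self_sub_mul_self_eq]
      _ = P^(k+1) • ((newton P h2 m (k+1) + newton P h2 m k) * E) := by
          simp only [mul_smul_comm, smul_smul, pow_succ]
          module

lemma newton_sym (σ : Matrix (Fin n) (Fin n) R → Matrix (Fin n) (Fin n) R)
    (hσm : σ m = m) (hσ0 : σ 0 = 0)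
    (hσsub : ∀ X Y, σ (X - Y) = σ X - σ Y)
    (hσsmul : ∀ (r : R) X, σ (r • X) = r • σ X)
    (hσsq : ∀ X, σ (X * X) = σ X * σ X) (k : ℕ) :
    σ (newton P h2 m k) = newton P h2 m k := by
  induction k with
  | zero => exact hσ0
  | succ k ih =>
    show σ (h2 • (m - P • _)) = h2 • (m - P • _)
    rw [hσsmul, hσsub, hσsmul, hσsq, ih, hσm]

lemma sqrt_main (pre : IsPrecomplete (Ideal.span {P}) R)
    (hh : IsHausdorff (Ideal.span {P}) R)
    (hh2 : 2 * h2 = 1)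
    (σ : Matrix (Fin n) (Fin n) R → Matrix (Fin n) (Fin n) R)
    (hσm : σ m = m) (hσ0 : σ 0 = 0)
    (hσadd : ∀ X Y, σ (X + Y) = σ X + σ Y)
    (hσsub : ∀ X Y, σ (X - Y) = σ X - σ Y)
    (hσsmul : ∀ (r : R) X, σ (r • X) = r • σ X)
    (hσsq : ∀ X, σ (X * X) = σ X * σ X) :
    ∃ L : Matrix (Fin n) (Fin n) R, (2:R) • L + P • (L * L) = m ∧ σ L = L := by
  obtain ⟨L, hL⟩ := matrix_limit P pre (newton P h2 m) (newton_cauchy P h2 m)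
  refine ⟨L, ?_, ?_⟩
  · rw [← sub_eq_zero]
    apply matrix_haus P hh
    intro k
    obtain ⟨F, hF⟩ := hL k
    obtain ⟨G, hG⟩ := newton_err P h2 m hh2 k
    refine ⟨(2:R) • F + P • (F * L + newton P h2 m k * F) + G, ?_⟩
    have split : (2:R) • L + P • (L * L) - m
        = (2:R) • (L - newton P h2 m k)
          + P • ((L - newton P h2 m k) * L
              + newton P h2 m k * (L - newton P h2 m k))
          + ((2:R) • newton P h2 m k
              + P • (newton P h2 m k * newton P h2 m k) - m) := by
      simp only [mul_sub, sub_mul, smul_sub, smul_add]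
      abel
    rw [split, hF, hG]
    simp only [smul_smul, mul_smul_comm, smul_mul_assoc, smul_add]
    module
  · rw [← sub_eq_zero]
    apply matrix_haus P hh
    intro k
    obtain ⟨F, hF⟩ := hL k
    refine ⟨σ F - F, ?_⟩
    have hLk : L = P^k • F + newton P h2 m k := by rw [← hF]; abel
    calc σ L - L = σ (P^k • F + newton P h2 m k) - (P^k • F + newton P h2 m k) := by
          rw [← hLk]
      _ = P^k • σ F + newton P h2 m k - (P^k • F + newton P h2 m k) := by
          rw [hσadd, hσsmul, newton_sym P h2 m σ hσm hσ0 hσsub hσsmul hσsq k]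
      _ = P^k • (σ F - F) := by rw [smul_sub]; abel

end Stmt13


/-- Cartan decomposition for the δ-Lie algebra (Proposition 5.5): for a split form
`q` (`qᵗ = ±q`, `qqᵗ = 1`, `q^{(p)} = q`) over a complete DVR with maximal ideal `(p)`,
every matrix `a` has a unique decomposition `a = b +_δ c` with `b ∈ g⁺` and `c ∈ g⁻` for
the involution `b ↦ −_δ(q⁻¹ bᵗ q)`; here `neg` denotes the `+_δ`-inverse. -/
theorem stmt_13 (p : ℕ) (hp : p.Prime) (hodd : Odd p)
    (R : Type*) [CommRing R] [IsDomain R] [IsDiscreteValuationRing R]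
    (hirr : Irreducible (p : R))
    (hcomp : IsAdicComplete (Ideal.span {(p : R)}) R)
    (n : ℕ) (ε : R) (hε : ε = 1 ∨ ε = -1)
    (q : Matrix (Fin n) (Fin n) R)
    (hqt : qᵀ = ε • q) (hqq : q * qᵀ = 1) (hqp : q.map (· ^ p) = q)
    (neg : Matrix (Fin n) (Fin n) R → Matrix (Fin n) (Fin n) R)
    (hneg : ∀ a, a + neg a + (p : R) • (a * neg a) = 0 ∧
        neg a + a + (p : R) • (neg a * a) = 0) :
    ∀ a : Matrix (Fin n) (Fin n) R,
      ∃! bc : Matrix (Fin n) (Fin n) R × Matrix (Fin n) (Fin n) R,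
        neg (q⁻¹ * bc.1ᵀ * q) = bc.1 ∧
        neg (q⁻¹ * bc.2ᵀ * q) = neg bc.2 ∧
        bc.1 + bc.2 + (p : R) • (bc.1 * bc.2) = a := by
  have hqinv : q⁻¹ = qᵀ := Matrix.inv_eq_right_inv hqq
  simp only [hqinv]
  intro a
  classical
  set P : R := (p : R) with hPdef
  have hP0 : P ≠ 0 := hirr.ne_zero
  have hreg : ∀ X : Matrix (Fin n) (Fin n) R, P • X = 0 → X = 0 := by
    intro X hX
    ext i j
    have h := congrFun (congrFun hX i) j
    simp only [Matrix.smul_apply, smul_eq_mul, Matrix.zero_apply] at h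
    rcases mul_eq_zero.mp h with h | h
    · exact absurd h hP0
    · exact h
  have hhaus : ∀ X : Matrix (Fin n) (Fin n) R, (∀ k, ∃ E, X = P^k • E) → X = 0 :=
    Stmt13.matrix_haus P hcomp.toIsHausdorff
  have hu2 : IsUnit (2:R) := by
    by_contra hn
    have h2m : (2:R) ∈ IsLocalRing.maximalIdeal R := (IsLocalRing.mem_maximalIdeal _).mpr hn
    rw [(IsDiscreteValuationRing.irreducible_iff_uniformizer P).mp hirr] at h2m
    obtain ⟨s, hs⟩ := Ideal.mem_span_singleton'.mp h2m
    obtain ⟨t, ht⟩ := hodd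
    have hcast : P = 2*(t:R)+1 := by rw [hPdef, ht]; push_cast; ring
    refine hirr.not_isUnit (IsUnit.of_mul_eq_one (a := P) (1 - s*(t:R)) ?_)
    linear_combination hcast - (t:R) * hs
  obtain ⟨u2, hu2e⟩ := hu2
  set h2 : R := ((u2⁻¹ : Rˣ) : R) with hh2def
  have hh2 : 2 * h2 = 1 := by rw [← hu2e, hh2def]; exact u2.mul_inv
  -- the involution on matrices
  have hqtq : qᵀ * q = 1 := mul_eq_one_comm.mp hqq
  have hε2 : ε * ε = 1 := by rcases hε with h | h <;> rw [h] <;> ring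
  set σ : Matrix (Fin n) (Fin n) R → Matrix (Fin n) (Fin n) R :=
    fun X => qᵀ * Xᵀ * q with hσdef
  have hσadd : ∀ X Y, σ (X + Y) = σ X + σ Y := by
    intro X Y; simp only [hσdef, transpose_add, mul_add, add_mul]
  have hσsub : ∀ X Y, σ (X - Y) = σ X - σ Y := by
    intro X Y; simp only [hσdef, transpose_sub, mul_sub, sub_mul]
  have hσsmul : ∀ (r : R) X, σ (r • X) = r • σ X := by
    intro r X; simp only [hσdef, transpose_smul, mul_smul_comm, smul_mul_assoc]
  have hσ0 : σ 0 = 0 := by simp [hσdef]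
  have hσ1 : σ 1 = 1 := by simp only [hσdef, transpose_one, mul_one]; exact hqtq
  have hcancel : ∀ Z : Matrix (Fin n) (Fin n) R, q * (qᵀ * Z) = Z := by
    intro Z; rw [← Matrix.mul_assoc, hqq, one_mul]
  have hσmul : ∀ X Y, σ (X * Y) = σ Y * σ X := by
    intro X Y
    show qᵀ * (X * Y)ᵀ * q = (qᵀ * Yᵀ * q) * (qᵀ * Xᵀ * q)
    rw [transpose_mul]
    simp only [Matrix.mul_assoc]
    rw [hcancel]
  have hσsq : ∀ X, σ (X * X) = σ X * σ X := fun X => hσmul X X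
  have hqsq : q * q = ε • 1 := by
    have h1 : ε • (q * q) = 1 := by rw [← mul_smul_comm, ← hqt, hqq]
    calc q*q = (ε*ε) • (q*q) := by rw [hε2, one_smul]
      _ = ε • (ε • (q*q)) := by rw [smul_smul]
      _ = ε • 1 := by rw [h1]
  have ht2 : qᵀ * qᵀ = ε • 1 := by
    rw [hqt, smul_mul_assoc, mul_smul_comm, smul_smul, hε2, one_smul, hqsq]
  have hσσ : ∀ X, σ (σ X) = X := by
    intro X
    show qᵀ * (qᵀ * Xᵀ * q)ᵀ * q = X
    calc qᵀ * (qᵀ * Xᵀ * q)ᵀ * q = (qᵀ * qᵀ) * X * (q * q) := by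
          simp only [transpose_mul, transpose_transpose, Matrix.mul_assoc]
      _ = X := by
          rw [ht2, hqsq]
          simp [smul_mul_assoc, mul_smul_comm, smul_smul, hε2]
  -- group-level translations
  have hexp : ∀ x y : Matrix (Fin n) (Fin n) R,
      (1 + P • x) * (1 + P • y) = 1 + P • (x + y + P • (x * y)) := by
    intro x y
    simp only [mul_add, add_mul, mul_one, one_mul, smul_add, smul_smul,
      mul_smul_comm, smul_mul_assoc]
    abel
  have hUnit : ∀ x, (1 + P • x) * (1 + P • neg x) = 1
      ∧ (1 + P • neg x) * (1 + P • x) = 1 := by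
    intro x
    obtain ⟨h1, h2'⟩ := hneg x
    constructor
    · rw [hexp x (neg x), h1, smul_zero, add_zero]
    · rw [hexp (neg x) x, h2', smul_zero, add_zero]
  have hcancelP : ∀ X Y : Matrix (Fin n) (Fin n) R, 1 + P • X = 1 + P • Y → X = Y := by
    intro X Y hXY
    have h5 : P • (X - Y) = 0 := by rw [smul_sub, add_left_cancel hXY, sub_self]
    exact sub_eq_zero.mp (hreg _ h5)
  have hnegeq : ∀ x y, (1 + P • x) * (1 + P • y) = 1 → neg x = y := by
    intro x y hxy
    have h1 := (hUnit x).2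
    refine (hcancelP _ _ ?_).symm
    calc 1 + P • y = ((1 + P • neg x) * (1 + P • x)) * (1 + P • y) := by rw [h1, one_mul]
      _ = (1 + P • neg x) * ((1 + P • x) * (1 + P • y)) := by rw [Matrix.mul_assoc]
      _ = 1 + P • neg x := by rw [hxy, mul_one]
  have hc_of : ∀ c, neg (σ c) = neg c → σ c = c := by
    intro c h
    have h1 : (1 + P • σ c) * (1 + P • neg c) = 1 := by rw [← h]; exact (hUnit (σ c)).1
    have h2' := (hUnit c).2
    refine hcancelP _ _ ?_
    calc 1 + P • σ c = (1 + P • σ c) * ((1 + P • neg c) * (1 + P • c)) := by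
          rw [h2', mul_one]
      _ = ((1 + P • σ c) * (1 + P • neg c)) * (1 + P • c) := by rw [Matrix.mul_assoc]
      _ = 1 + P • c := by rw [h1, one_mul]
  have hσgrp : ∀ x, σ (1 + P • x) = 1 + P • σ x := by
    intro x; rw [hσadd, hσ1, hσsmul]
  -- the square root
  set m : Matrix (Fin n) (Fin n) R := σ a + a + P • (σ a * a) with hmdef
  have hMid : (1 + P • σ a) * (1 + P • a) = 1 + P • m := by
    rw [hmdef]; exact hexp _ _
  have hσm : σ m = m := by
    rw [hmdef, hσadd, hσadd, hσsmul, hσmul (σ a) a, hσσ]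
    abel
  obtain ⟨L, hL1, hL2⟩ := Stmt13.sqrt_main P h2 m hcomp.toIsPrecomplete
    hcomp.toIsHausdorff hh2 σ hσm hσ0 hσadd hσsub hσsmul hσsq
  have hCsq : (1 + P • L) * (1 + P • L) = 1 + P • m := by
    rw [hexp L L]
    congr 2
    rw [← hL1, two_smul]
  have hσnegL : σ (neg L) = neg L := by
    have h3 := congrArg σ (hUnit L).1
    rw [hσmul, hσ1, hσgrp, hσgrp, hL2] at h3
    refine hcancelP _ _ ?_
    calc 1 + P • σ (neg L)
        = ((1 + P • σ (neg L)) * (1 + P • L)) * (1 + P • neg L) := by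
          rw [Matrix.mul_assoc, (hUnit L).1, mul_one]
      _ = 1 + P • neg L := by rw [h3, one_mul]
  -- construct b
  set b : Matrix (Fin n) (Fin n) R := (a - L) * (1 + P • neg L) with hbdef
  have hBC : (1 + P • b) * (1 + P • L) = 1 + P • a := by
    calc (1 + P • b) * (1 + P • L)
        = (1 + P • L) + P • ((a - L) * ((1 + P • neg L) * (1 + P • L))) := by
          rw [hbdef, add_mul, one_mul, smul_mul_assoc, Matrix.mul_assoc]
      _ = (1 + P • L) + P • (a - L) := by rw [(hUnit L).2, mul_one]
      _ = 1 + P • a := by rw [smul_sub]; abel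
  have hkey : ∀ x1 x2 : Matrix (Fin n) (Fin n) R,
      (1 + P • σ x1) * (1 + P • x1) = 1 → σ x2 = x2 →
      (1 + P • x1) * (1 + P • x2) = 1 + P • a →
      (1 + P • x2) * (1 + P • x2) = σ (1 + P • a) * (1 + P • a) := by
    intro x1 x2 h1 h2' h3
    have hval : (1 + P • x2) * (1 + P • σ x1) * ((1 + P • x1) * (1 + P • x2))
        = (1 + P • x2) * (1 + P • x2) := by
      calc (1 + P • x2) * (1 + P • σ x1) * ((1 + P • x1) * (1 + P • x2))
          = (1 + P • x2) * (((1 + P • σ x1) * (1 + P • x1)) * (1 + P • x2)) := by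
            simp only [Matrix.mul_assoc]
        _ = (1 + P • x2) * (1 + P • x2) := by rw [h1, one_mul]
    rw [← h3, hσmul, hσgrp, hσgrp, h2', hval]
  have hbplus : (1 + P • σ b) * (1 + P • b) = 1 := by
    have hBA : 1 + P • b = (1 + P • a) * (1 + P • neg L) := by
      calc 1 + P • b = ((1 + P • b) * (1 + P • L)) * (1 + P • neg L) := by
            rw [Matrix.mul_assoc, (hUnit L).1, mul_one]
        _ = (1 + P • a) * (1 + P • neg L) := by rw [hBC]
    rw [← hσgrp, hBA, hσmul, hσgrp, hσgrp, hσnegL]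
    calc (1 + P • neg L) * (1 + P • σ a) * ((1 + P • a) * (1 + P • neg L))
        = (1 + P • neg L) * (((1 + P • σ a) * (1 + P • a)) * (1 + P • neg L)) := by
          simp only [Matrix.mul_assoc]
      _ = (1 + P • neg L) * ((1 + P • L) * ((1 + P • L) * (1 + P • neg L))) := by
          rw [hMid, ← hCsq, Matrix.mul_assoc]
      _ = 1 := by rw [(hUnit L).1, mul_one, (hUnit L).2]
  refine ⟨(b, L), ⟨?_, ?_, ?_⟩, ?_⟩
  · exact hnegeq (σ b) b hbplus
  · show neg (σ L) = neg L
    rw [hL2]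
  · refine hcancelP _ _ ?_
    rw [← hexp, hBC]
  · rintro ⟨y1, y2⟩ ⟨hy1, hy2, hy3⟩
    have hy1' : (1 + P • σ y1) * (1 + P • y1) = 1 := by
      have h := (hUnit (σ y1)).1
      rw [show neg (σ y1) = y1 from hy1] at h
      exact h
    have hy2' : σ y2 = y2 := hc_of y2 hy2
    have hy3' : (1 + P • y1) * (1 + P • y2) = 1 + P • a := by rw [hexp, hy3]
    have hsq := hkey y1 y2 hy1' hy2' hy3'
    have hsqL := hkey b L hbplus hL2 hBC
    have hy2L : y2 = L := Stmt13.sq_inj P h2 hh2 hreg hhaus y2 L (by rw [hsq, hsqL])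
    have hy1b : y1 = b := by
      apply hcancelP
      calc 1 + P • y1 = ((1 + P • y1) * (1 + P • y2)) * (1 + P • neg L) := by
            rw [hy2L, Matrix.mul_assoc, (hUnit L).1, mul_one]
        _ = ((1 + P • b) * (1 + P • L)) * (1 + P • neg L) := by rw [hy3', hBC]
        _ = 1 + P • b := by rw [Matrix.mul_assoc, (hUnit L).1, mul_one]
    simp only [Prod.mk.injEq]
    exact ⟨hy1b, hy2L⟩
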